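/- Let H be a finite simple graph and let G_1, G_2 be simple graphs on the same finite vertex set V. Then the number of graph homomorphisms from H is supermodular with respect to union and intersection of edge sets: hom(H, G_1 ⊔ G_2) + hom(H, G_1 ⊓ G_2) ≥ hom(H, G_1) + hom(H, G_2), where G_1 ⊔ G_2 (resp. G_1 ⊓ G_2) is the graph on V whose edge set is the union (resp. intersection) of the edge sets of G_1 and G_2. -/
import Mathlib


/-- the number of graph homomorphisms `hom(H, ·)` is supermodular
with respect to union and intersection of the edge sets of graphs on a common
finite vertex set `V`. -/
theorem hom_count_supermodular {W V : Type*} [Fintype W] [Fintype V]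
    (H : SimpleGraph W) (G₁ G₂ : SimpleGraph V) :
    Nat.card {f : W → V // ∀ a b, H.Adj a b → G₁.Adj (f a) (f b)}
      + Nat.card {f : W → V // ∀ a b, H.Adj a b → G₂.Adj (f a) (f b)}
    ≤ Nat.card {f : W → V // ∀ a b, H.Adj a b → (G₁ ⊔ G₂).Adj (f a) (f b)}
      + Nat.card {f : W → V // ∀ a b, H.Adj a b → (G₁ ⊓ G₂).Adj (f a) (f b)} := by
  classical
  let A : Set (W → V) := {f | ∀ a b, H.Adj a b → G₁.Adj (f a) (f b)}
  let B : Set (W → V) := {f | ∀ a b, H.Adj a b → G₂.Adj (f a) (f b)}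
  let U : Set (W → V) := {f | ∀ a b, H.Adj a b → (G₁ ⊔ G₂).Adj (f a) (f b)}
  let I : Set (W → V) := {f | ∀ a b, H.Adj a b → (G₁ ⊓ G₂).Adj (f a) (f b)}
  have hI : I = A ∩ B := by
    ext f
    simp only [I, A, B, Set.mem_setOf_eq, Set.mem_inter_iff, SimpleGraph.inf_adj]
    exact ⟨fun h => ⟨fun a b hab => (h a b hab).1, fun a b hab => (h a b hab).2⟩,
      fun h a b hab => ⟨h.1 a b hab, h.2 a b hab⟩⟩
  have hU : A ∪ B ⊆ U := by
    rintro f (hf | hf) a b hab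
    · exact Or.inl (hf a b hab)
    · exact Or.inr (hf a b hab)
  have h1 : Nat.card A = A.ncard := (Nat.card_coe_set_eq A)
  have key : (A ∪ B).ncard + (A ∩ B).ncard = A.ncard + B.ncard :=
    Set.ncard_union_add_ncard_inter A B (Set.toFinite A) (Set.toFinite B)
  have hle : (A ∪ B).ncard ≤ U.ncard := Set.ncard_le_ncard hU (Set.toFinite U)
  show Nat.card A + Nat.card B ≤ Nat.card U + Nat.card I
  rw [Nat.card_coe_set_eq A, Nat.card_coe_set_eq B, Nat.card_coe_set_eq U,
    Nat.card_coe_set_eq I, hI]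
  omega
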